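/- Let G be a finite simple chordal graph, i.e. every cycle of G of length at least 4 has a chord. Let F ⊆ E(G) be a set of edges such that for all vertices u_1, u_2, u_3 that are pairwise adjacent in G, if u_1u_2 ∈ F and u_2u_3 ∈ F then u_1u_3 ∈ F. Then for every edge uv ∈ E(G): uv ∈ F if and only if u and v lie in the same connected component of the graph (V(G), F). -/

import Mathlib

open Finset

noncomputable section
open scoped Classical

lemma edge_mem_of_length_one {V : Type*} {G : SimpleGraph V} {a b : V}
    (w : G.Walk a b) (h : w.length = 1) : s(a, b) ∈ w.edges := by
  cases w with
  | nil => simp at h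
  | cons hadj w' =>
    have h0 : w'.length = 0 := by simpa using h
    have := SimpleGraph.Walk.eq_of_length_eq_zero h0
    subst this
    simp

lemma shorten_aux {V : Type*} {G H : SimpleGraph V} {F : Set (Sym2 V)}
    (hH : ∀ a b : V, s(a, b) ∈ F → a ≠ b → H.Adj a b) {n : ℕ}
    (IH : ∀ m, m < n → ∀ a b : V, G.Adj a b → ∀ p : H.Walk a b, p.length ≤ m → s(a, b) ∈ F)
    {u v x y : V} (huv : G.Adj u v) (hxy : G.Adj x y)
    (w1 : H.Walk u x) (w2 : H.Walk x y) (w3 : H.Walk y v)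
    (hlen : w1.length + w2.length + w3.length ≤ n)
    (h2 : 2 ≤ w2.length)
    (hpos : 1 ≤ w1.length + w3.length) : s(u, v) ∈ F := by
  have hch : s(x, y) ∈ F := IH w2.length (by omega) x y hxy w2 le_rfl
  have hHxy : H.Adj x y := hH x y hch hxy.ne
  exact IH (w1.length + w3.length + 1) (by omega) u v huv
    (w1.append (SimpleGraph.Walk.cons hHxy w3))
    (by simp [SimpleGraph.Walk.length_append]; omega)


/-- in a chordal graph, if a set `F` of edges is transitive on triangles,
then an edge of the graph belongs to `F` iff its endpoints are connected in the
spanning subgraph with edge set `F`. -/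
theorem chordal_triangle_transitive_edges {V : Type*} [Fintype V]
    (G : SimpleGraph V)
    (hchordal : ∀ (v : V) (c : G.Walk v v), c.IsCycle → 4 ≤ c.length →
      ∃ a b : V, a ∈ c.support ∧ b ∈ c.support ∧ G.Adj a b ∧ s(a, b) ∉ c.edges)
    (F : Set (Sym2 V)) (hF : F ⊆ G.edgeSet)
    (htrans : ∀ u₁ u₂ u₃ : V, G.Adj u₁ u₂ → G.Adj u₂ u₃ → G.Adj u₁ u₃ →
      s(u₁, u₂) ∈ F → s(u₂, u₃) ∈ F → s(u₁, u₃) ∈ F) :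
    ∀ u v : V, G.Adj u v →
      (s(u, v) ∈ F ↔ (SimpleGraph.fromEdgeSet F).Reachable u v) := by
  set H := SimpleGraph.fromEdgeSet F with hHdef
  have hH : ∀ a b : V, s(a, b) ∈ F → a ≠ b → H.Adj a b := fun a b h hne =>
    (SimpleGraph.fromEdgeSet_adj _).mpr ⟨h, hne⟩
  have hHF : ∀ a b : V, H.Adj a b → s(a, b) ∈ F := fun a b h =>
    ((SimpleGraph.fromEdgeSet_adj _).mp h).1
  have hle : H ≤ G := by
    intro a b hab
    exact (G.mem_edgeSet).mp (hF (hHF a b hab))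
  have key : ∀ n : ℕ, ∀ u v : V, G.Adj u v → ∀ p : H.Walk u v, p.length ≤ n → s(u, v) ∈ F := by
    intro n
    induction n using Nat.strong_induction_on with
    | _ n IH =>
    intro u v huv p hlen
    -- replace by a path
    have hbp : p.bypass.IsPath := p.bypass_isPath
    have hbl : p.bypass.length ≤ n := le_trans p.length_bypass_le hlen
    set q := p.bypass with hqdef
    clear_value q
    clear hqdef hlen p
    by_contra hne
    -- the main (long) case
    have main : 3 ≤ q.length → False := by
      intro hq3
      have hqF : ∀ e ∈ q.edges, e ∈ F := by
        intro e he
        have := q.edges_subset_edgeSet he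
        rw [SimpleGraph.edgeSet_fromEdgeSet] at this
        exact this.1
      set r : G.Walk v u := (q.mapLe hle).reverse with hrdef
      have hr : r.IsPath := (hbp.mapLe hle).reverse
      have hrsupp : ∀ x, x ∈ r.support → x ∈ q.support := by
        intro x hx
        rw [hrdef, SimpleGraph.Walk.support_reverse, List.mem_reverse,
          SimpleGraph.Walk.mapLe, SimpleGraph.Walk.support_map] at hx
        simpa using hx
      have hredges : ∀ e, e ∈ r.edges ↔ e ∈ q.edges := by
        intro e
        rw [hrdef, SimpleGraph.Walk.edges_reverse, List.mem_reverse,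
          SimpleGraph.Walk.mapLe, SimpleGraph.Walk.edges_map]
        simp [Sym2.map_id]
      have hsuv : s(u, v) ∉ r.edges := fun h => hne (hqF _ ((hredges _).mp h))
      have hc : (SimpleGraph.Walk.cons huv r).IsCycle :=
        (SimpleGraph.Walk.cons_isCycle_iff r huv).mpr ⟨hr, hsuv⟩
      have hrlen : r.length = q.length := by
        rw [hrdef, SimpleGraph.Walk.length_reverse, SimpleGraph.Walk.mapLe,
          SimpleGraph.Walk.length_map]
      obtain ⟨a, b, ha, hb, hab, habe⟩ := hchordal u (SimpleGraph.Walk.cons huv r) hc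
        (by rw [SimpleGraph.Walk.length_cons, hrlen]; omega)
      -- a, b on q's support
      have hsupp : ∀ x, x ∈ (SimpleGraph.Walk.cons huv r).support → x ∈ q.support := by
        intro x hx
        rw [SimpleGraph.Walk.support_cons] at hx
        rcases List.mem_cons.mp hx with h | h
        · subst h; exact q.start_mem_support
        · exact hrsupp x h
      have ha' : a ∈ q.support := hsupp a ha
      have hb' : b ∈ q.support := hsupp b hb
      have habq : s(a, b) ∉ q.edges := by
        intro h
        exact habe (by rw [SimpleGraph.Walk.edges_cons]; exact List.mem_cons_of_mem _ ((hredges _).mpr h))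
      have habuv : s(a, b) ≠ s(u, v) := by
        intro h
        exact habe (by rw [SimpleGraph.Walk.edges_cons, h]; exact List.mem_cons_self)
      -- split
      have hqlen1 : (q.takeUntil a ha').length + (q.dropUntil a ha').length = q.length := by
        have := congrArg SimpleGraph.Walk.length (q.take_spec ha')
        rwa [SimpleGraph.Walk.length_append] at this
      have hbsplit := hb'
      rw [← q.take_spec ha', SimpleGraph.Walk.mem_support_append_iff] at hbsplit
      rcases hbsplit with hbt | hbd
      · -- b before a : walks u → b → a → v
        set t := q.takeUntil a ha' with htdef
        have hts : ∀ e ∈ t.edges, e ∈ q.edges := q.edges_takeUntil_subset ha'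
        have htlen : (t.takeUntil b hbt).length + (t.dropUntil b hbt).length = t.length := by
          have := congrArg SimpleGraph.Walk.length (t.take_spec hbt)
          rwa [SimpleGraph.Walk.length_append] at this
        have h2 : 2 ≤ (t.dropUntil b hbt).length := by
          rcases Nat.lt_or_ge (t.dropUntil b hbt).length 2 with hlt | hge
          · interval_cases hl : (t.dropUntil b hbt).length
            · exact absurd (SimpleGraph.Walk.eq_of_length_eq_zero hl) hab.ne.symm
            · exact absurd (hts _ (t.edges_dropUntil_subset hbt
                (by rw [Sym2.eq_swap] at habq ⊢; exact edge_mem_of_length_one _ hl))) habq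
          · exact hge
        have hpos : 1 ≤ (t.takeUntil b hbt).length + (q.dropUntil a ha').length := by
          by_contra hcon
          push_neg at hcon
          have h1 : (t.takeUntil b hbt).length = 0 := by omega
          have h2' : (q.dropUntil a ha').length = 0 := by omega
          have hub : u = b := SimpleGraph.Walk.eq_of_length_eq_zero h1
          have hav : a = v := SimpleGraph.Walk.eq_of_length_eq_zero h2'
          exact habuv (by rw [← hub, ← hav, Sym2.eq_swap])
        exact hne (shorten_aux hH IH huv hab.symm (t.takeUntil b hbt) (t.dropUntil b hbt)
          (q.dropUntil a ha') (by omega) h2 hpos)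
      · -- a before b : walks u → a → b → v
        set d := q.dropUntil a ha' with hddef
        have hds : ∀ e ∈ d.edges, e ∈ q.edges := q.edges_dropUntil_subset ha'
        have hdlen : (d.takeUntil b hbd).length + (d.dropUntil b hbd).length = d.length := by
          have := congrArg SimpleGraph.Walk.length (d.take_spec hbd)
          rwa [SimpleGraph.Walk.length_append] at this
        have h2 : 2 ≤ (d.takeUntil b hbd).length := by
          rcases Nat.lt_or_ge (d.takeUntil b hbd).length 2 with hlt | hge
          · interval_cases hl : (d.takeUntil b hbd).length
            · exact absurd (SimpleGraph.Walk.eq_of_length_eq_zero hl) hab.ne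
            · exact absurd (hds _ (d.edges_takeUntil_subset hbd
                (edge_mem_of_length_one _ hl))) habq
          · exact hge
        have hpos : 1 ≤ (q.takeUntil a ha').length + (d.dropUntil b hbd).length := by
          by_contra hcon
          push_neg at hcon
          have h1 : (q.takeUntil a ha').length = 0 := by omega
          have h2' : (d.dropUntil b hbd).length = 0 := by omega
          have hua : u = a := SimpleGraph.Walk.eq_of_length_eq_zero h1
          have hbv : b = v := SimpleGraph.Walk.eq_of_length_eq_zero h2'
          exact habuv (by rw [← hua, ← hbv])
        exact hne (shorten_aux hH IH huv hab (q.takeUntil a ha') (d.takeUntil b hbd)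
          (d.dropUntil b hbd) (by omega) h2 hpos)
    rcases Nat.lt_or_ge q.length 3 with h3 | h3
    · clear main
      cases q with
      | nil => exact huv.ne rfl
      | cons h q' =>
        cases q' with
        | nil => exact hne (hHF _ _ h)
        | cons h' q'' =>
          cases q'' with
          | nil =>
            exact hne (htrans u _ v (hle h) (hle h') huv (hHF _ _ h) (hHF _ _ h'))
          | cons h'' q''' =>
            simp only [SimpleGraph.Walk.length_cons] at h3
            omega
    · exact main h3
  intro u v huv
  constructor
  · intro h
    exact (hH u v h huv.ne).reachable
  · intro h
    obtain ⟨p⟩ := h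
    exact key p.length u v huv p le_rfl
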